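/- Let p be a prime, let j ≥ 1, and let θ be an integer coprime to p, of parity opposite to that of p (i.e. θ + p is odd), with 0 < |θ| < p^j. Then there exist an integer n ≥ 1 and even integers a₁, …, aₙ such that the n×n symmetric tridiagonal integer matrix T whose diagonal entries are a₁, …, aₙ, whose entries on the first super- and sub-diagonal are all equal to 1, and whose other entries are 0, satisfies |det T| = p^j and, over the rationals, the (1,1)-entry of T⁻¹ equals θ/p^j. -/

import Mathlib

open Matrix

def triM {n : ℕ} (a : Fin n → ℤ) : Matrix (Fin n) (Fin n) ℤ :=
  Matrix.of fun i k =>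
    if (i : ℕ) = k then a i else if (i : ℕ) + 1 = k ∨ (k : ℕ) + 1 = i then 1 else 0

lemma triM_submatrix_succ {n : ℕ} (a : Fin (n + 1) → ℤ) :
    (triM a).submatrix Fin.succ Fin.succ = triM (fun i => a i.succ) := by
  ext i k
  simp only [triM, submatrix_apply, of_apply, Fin.val_succ]
  have h1 : ((i:ℕ) + 1 = (k:ℕ) + 1) ↔ ((i:ℕ) = (k:ℕ)) := by omega
  have h2 : ((i:ℕ) + 1 + 1 = (k:ℕ) + 1 ∨ (k:ℕ) + 1 + 1 = (i:ℕ) + 1) ↔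
      ((i:ℕ) + 1 = (k:ℕ) ∨ (k:ℕ) + 1 = (i:ℕ)) := by omega
  simp only [h1, h2]

lemma triM_det_one (a : Fin 1 → ℤ) : (triM a).det = a 0 := by
  rw [det_fin_one]; rfl

lemma triM_det_rec {n : ℕ} (a : Fin (n + 2) → ℤ) :
    (triM a).det = a 0 * (triM (fun i => a i.succ)).det
      - (triM (fun i : Fin n => a i.succ.succ)).det := by
  rw [det_succ_row_zero, Fin.sum_univ_succ, Fin.sum_univ_succ]
  have h00 : triM a 0 0 = a 0 := rfl
  have h01 : triM a 0 (Fin.succ 0) = 1 := by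
    simp [triM, Fin.ext_iff]
  have h0rest : ∀ i : Fin n, triM a 0 i.succ.succ = 0 := by
    intro i
    simp only [triM, of_apply, Fin.val_succ, Fin.val_zero]
    have h1 : ¬ ((0:ℕ) = (i:ℕ) + 1 + 1) := by omega
    have h2 : ¬ ((0:ℕ) + 1 = (i:ℕ) + 1 + 1 ∨ ((i:ℕ) + 1 + 1) + 1 = 0) := by omega
    simp [h1, h2]
  simp only [h0rest, mul_zero, zero_mul, Finset.sum_const_zero, add_zero, h00, h01]
  have e1 : ((triM a).submatrix Fin.succ (Fin.succAbove 0)).det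
      = (triM (fun i => a i.succ)).det := by
    rw [Fin.succAbove_zero, triM_submatrix_succ]
  have e2 : ((triM a).submatrix Fin.succ (Fin.succ 0).succAbove).det
      = (triM (fun i : Fin n => a i.succ.succ)).det := by
    set M' := (triM a).submatrix Fin.succ (Fin.succ 0).succAbove with hM'
    rw [det_succ_column_zero, Fin.sum_univ_succ]
    have hcol : ∀ i : Fin n, M' i.succ 0 = 0 := by
      intro i
      simp only [hM', submatrix_apply, Fin.succ_succAbove_zero]
      simp only [triM, of_apply, Fin.val_succ, Fin.val_zero]
      have h1 : ¬ ((i:ℕ) + 1 + 1 = 0) := by omega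
      have h2 : ¬ ((i:ℕ) + 1 + 1 + 1 = 0 ∨ (0:ℕ) + 1 = (i:ℕ) + 1 + 1) := by omega
      simp [h1, h2]
    have hc0 : M' 0 0 = 1 := by
      simp only [hM', submatrix_apply, Fin.succ_succAbove_zero]
      simp [triM, Fin.ext_iff]
    simp only [hcol, mul_zero, zero_mul, Finset.sum_const_zero, add_zero, hc0]
    have hsub : M'.submatrix (Fin.succAbove 0) Fin.succ
        = triM (fun i : Fin n => a i.succ.succ) := by
      rw [hM', Fin.succAbove_zero, submatrix_submatrix]
      have : ((Fin.succ 0).succAbove ∘ Fin.succ : Fin n → Fin (n+2)) = Fin.succ ∘ Fin.succ := by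
        funext k
        simp [Fin.succ_succAbove_succ]
      rw [this, ← submatrix_submatrix, triM_submatrix_succ, triM_submatrix_succ]
    rw [hsub]
    simp
  rw [e1, e2]
  simp
  ring

lemma key : ∀ (m : ℕ) (θ q : ℤ), θ.natAbs < m → IsCoprime θ q → Odd (θ + q) →
    θ ≠ 0 → |θ| < |q| →
    ∃ (n : ℕ) (a : Fin (n + 1) → ℤ),
      (∀ i, Even (a i)) ∧ |(triM a).det| = |q| ∧
      (triM a).det * θ = (triM (fun i : Fin n => a i.succ)).det * q := by
  intro m
  induction m with
  | zero => intro θ q h; omega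
  | succ m ih =>
    intro θ q hm hcop hodd hθ0 hlt
    by_cases h1 : θ.natAbs = 1
    · -- θ = ±1
      have hθθ : θ * θ = 1 := by
        rcases Int.natAbs_eq_iff.mp h1 with h | h <;> (subst h; ring)
      have hθodd : Odd θ := by
        rcases Int.natAbs_eq_iff.mp h1 with h | h <;> (subst h; decide)
      have hqeven : Even q := (Int.odd_add.mp hodd).mp hθodd
      refine ⟨0, fun _ => q * θ, fun i => hqeven.mul_right θ, ?_, ?_⟩
      · rw [triM_det_one]
        rw [abs_mul, Int.abs_eq_natAbs θ, h1]
        simp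
      · rw [triM_det_one]
        have : (triM (fun i : Fin 0 => (fun _ : Fin 1 => q * θ) i.succ)).det = 1 :=
          det_isEmpty
        rw [this, one_mul]
        calc q * θ * θ = q * (θ * θ) := by ring
          _ = q := by rw [hθθ, mul_one]
    · -- |θ| ≥ 2
      have h2 : 2 ≤ θ.natAbs := by
        rcases Nat.lt_or_ge θ.natAbs 2 with h | h
        · omega
        · exact h
      set k := q / θ with hk
      set s := q % θ with hs
      have hs0 : 0 ≤ s := Int.emod_nonneg q hθ0
      have hslt : s < |θ| := by rw [Int.abs_eq_natAbs]; exact Int.emod_lt q hθ0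
      have hq : θ * k + s = q := Int.mul_ediv_add_emod q θ
      have hsne : s ≠ 0 := by
        intro h
        have hdvd : θ ∣ q := Int.dvd_of_emod_eq_zero h
        have := hcop.isUnit_of_dvd' dvd_rfl hdvd
        have h7 : θ = 1 ∨ θ = -1 := Int.isUnit_iff.mp this
        rcases h7 with h' | h' <;> rw [h'] at h2 <;> simp at h2
      obtain ⟨a₁, ha₁even, hr0, hrlt⟩ :
          ∃ a₁ : ℤ, Even a₁ ∧ a₁ * θ - q ≠ 0 ∧ |a₁ * θ - q| < |θ| := by
        by_cases hke : Even k
        · refine ⟨k, hke, ?_, ?_⟩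
          · have h3 : k * θ - q = -s := by linear_combination hq
            rw [h3]; omega
          · have h3 : k * θ - q = -s := by linear_combination hq
            rw [h3, abs_neg, abs_of_nonneg hs0]; exact hslt
        · rcases lt_or_gt_of_ne hθ0 with hneg | hpos
          · refine ⟨k - 1, by simpa [Int.even_sub_one] using hke, ?_, ?_⟩
            · have h3 : (k - 1) * θ - q = -θ - s := by linear_combination hq
              rw [h3]
              have h4 : |θ| = -θ := abs_of_neg hneg
              omega
            · have h3 : (k - 1) * θ - q = -θ - s := by linear_combination hq
              have h4 : |θ| = -θ := abs_of_neg hneg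
              rw [h3]
              rw [abs_of_pos (by omega), h4]
              omega
          · refine ⟨k + 1, by simpa [Int.even_add_one] using hke, ?_, ?_⟩
            · have h3 : (k + 1) * θ - q = θ - s := by linear_combination hq
              rw [h3]
              have h4 : |θ| = θ := abs_of_pos hpos
              omega
            · have h3 : (k + 1) * θ - q = θ - s := by linear_combination hq
              have h4 : |θ| = θ := abs_of_pos hpos
              rw [h3, abs_of_pos (by omega), h4]
              omega
      set r := a₁ * θ - q with hrdef
      have hrcop : IsCoprime r θ := by
        have h5 : r = -q + θ * a₁ := by rw [hrdef]; ring
        rw [h5]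
        exact (hcop.symm.neg_left).add_mul_left_left a₁
      have hrodd : Odd (r + θ) := by
        have h5 : r + θ = a₁ * θ + (θ - q) := by rw [hrdef]; ring
        rw [h5]
        exact (ha₁even.mul_right θ).add_odd (Int.odd_sub.mpr (Int.odd_add.mp hodd))
      have hrnat : r.natAbs < m := by
        have h5 : r.natAbs < θ.natAbs := by
          have := Int.abs_eq_natAbs r
          have := Int.abs_eq_natAbs θ
          omega
        omega
      obtain ⟨n, b, hbe, hbabs, hbrel⟩ := ih r θ hrnat hrcop hrodd hr0 hrlt
      refine ⟨n + 1, Fin.cons a₁ b, ?_, ?_, ?_⟩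
      · intro i
        refine Fin.cases ?_ ?_ i
        · simpa using ha₁even
        · intro i'; simpa using hbe i'
      all_goals {
        have hb' : (fun i : Fin (n+1) => (Fin.cons a₁ b : Fin (n+2) → ℤ) i.succ) = b :=
          funext fun i => Fin.cons_succ _ _ _
        have hb'' : (fun i : Fin n => (Fin.cons a₁ b : Fin (n+2) → ℤ) i.succ.succ)
            = fun i : Fin n => b i.succ := funext fun i => Fin.cons_succ _ _ _
        have hdet : (triM (Fin.cons a₁ b)).det
            = a₁ * (triM b).det - (triM (fun i : Fin n => b i.succ)).det := by
          rw [triM_det_rec, hb', hb'', Fin.cons_zero]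
        have hrel : (triM (Fin.cons a₁ b)).det * θ = (triM b).det * q := by
          rw [hdet]
          have hqr : q = a₁ * θ - r := by rw [hrdef]; ring
          calc (a₁ * (triM b).det - (triM (fun i : Fin n => b i.succ)).det) * θ
              = a₁ * ((triM b).det * θ) - (triM (fun i : Fin n => b i.succ)).det * θ := by ring
            _ = a₁ * ((triM b).det * θ) - (triM b).det * r := by rw [← hbrel]
            _ = (triM b).det * (a₁ * θ - r) := by ring
            _ = (triM b).det * q := by rw [← hqr]
        first
        | · -- abs goal
            have h6 : |(triM (Fin.cons a₁ b)).det| * |θ| = |θ| * |q| := by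
              rw [← abs_mul, hrel, abs_mul, hbabs]
            have hθabs : |θ| ≠ 0 := by positivity
            exact (mul_left_cancel₀ hθabs (by linarith [h6] : |θ| * |(triM (Fin.cons a₁ b)).det| = |θ| * |q|))
        | · rw [hb']; exact hrel
      }

lemma det_map_int {m : ℕ} (M : Matrix (Fin m) (Fin m) ℤ) :
    (M.map (Int.cast : ℤ → ℚ)).det = (M.det : ℚ) := by
  have h : M.map (Int.cast : ℤ → ℚ) = (Int.castRingHom ℚ).mapMatrix M := rfl
  rw [h, ← RingHom.map_det]
  rfl



/-- The matrix-theoretic core of Lemma 5.4: for a prime `p`, `j ≥ 1`, and `θ` coprime to `p`, of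
parity opposite to `p`, with `0 < |θ| < p^j`, there is a symmetric tridiagonal integer matrix `T`
with even diagonal entries, ones on the first super- and sub-diagonals and zeros elsewhere, such
that `|det T| = p^j` and the `(1,1)`-entry of `T⁻¹` (over `ℚ`) is `θ / p^j`. -/
theorem stmt_3 (p : ℕ) (hp : p.Prime) (j : ℕ) (hj : 1 ≤ j) (θ : ℤ)
    (hcop : IsCoprime θ (p : ℤ)) (hpar : Odd (θ + (p : ℤ)))
    (hθ0 : 0 < |θ|) (hθ : |θ| < (p : ℤ) ^ j) :
    ∃ (n : ℕ) (a : Fin (n + 1) → ℤ) (T : Matrix (Fin (n + 1)) (Fin (n + 1)) ℤ),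
      (∀ i, Even (a i)) ∧
      (∀ i, T i i = a i) ∧
      (∀ i k : Fin (n + 1), (i : ℕ) + 1 = (k : ℕ) ∨ (k : ℕ) + 1 = (i : ℕ) → T i k = 1) ∧
      (∀ i k : Fin (n + 1), i ≠ k →
        ¬((i : ℕ) + 1 = (k : ℕ) ∨ (k : ℕ) + 1 = (i : ℕ)) → T i k = 0) ∧
      |T.det| = (p : ℤ) ^ j ∧
      ((T.map (Int.cast : ℤ → ℚ))⁻¹) 0 0 = (θ : ℚ) / (p : ℚ) ^ j := by
  set q : ℤ := (p : ℤ) ^ j with hqdef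
  have hq0 : 0 < q := pow_pos (by exact_mod_cast hp.pos) j
  have hqabs : |q| = q := abs_of_pos hq0
  have hθne : θ ≠ 0 := by rintro rfl; simp at hθ0
  have hcop' : IsCoprime θ q := hcop.pow_right
  have hodd : Odd (θ + q) := by
    rw [Int.odd_add]
    rw [Int.odd_add] at hpar
    rw [hqdef, Int.even_pow' (by omega : j ≠ 0)]
    exact hpar
  have hlt : |θ| < |q| := by rw [hqabs]; exact hθ
  obtain ⟨n, a, hae, habs, hrel⟩ :=
    key (θ.natAbs + 1) θ q (Nat.lt_succ_self _) hcop' hodd hθne hlt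
  refine ⟨n, a, triM a, hae, ?_, ?_, ?_, ?_, ?_⟩
  · intro i; simp [triM]
  · intro i k h
    have hik : (i : ℕ) ≠ (k : ℕ) := by omega
    simp [triM, hik, h]
  · intro i k hne h
    have hik : (i : ℕ) ≠ (k : ℕ) := fun hh => hne (Fin.ext hh)
    simp [triM, hik, h]
  · rw [habs, hqabs]
  · -- inverse entry
    set A := (triM a).map (Int.cast : ℤ → ℚ) with hA
    have hdetA : A.det = ((triM a).det : ℚ) := det_map_int _
    have hdetne : A.det ≠ 0 := by
      rw [hdetA]
      intro h
      have : (triM a).det = 0 := by exact_mod_cast h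
      rw [this] at habs
      simp at habs
      omega
    have hadj : A.adjugate 0 0 = ((triM (fun i : Fin n => a i.succ)).det : ℚ) := by
      rw [Matrix.adjugate_fin_succ_eq_det_submatrix]
      simp only [Fin.val_zero, add_zero, pow_zero, one_mul, Fin.succAbove_zero]
      rw [hA]
      rw [show ((triM a).map (Int.cast : ℤ → ℚ)).submatrix Fin.succ Fin.succ
          = ((triM a).submatrix Fin.succ Fin.succ).map (Int.cast : ℤ → ℚ) from rfl]
      rw [triM_submatrix_succ, det_map_int]
    rw [Matrix.inv_def, Matrix.smul_apply, hadj, Ring.inverse_eq_inv', smul_eq_mul, hdetA]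
    have hqQ : ((q : ℚ)) ≠ 0 := by exact_mod_cast hq0.ne'
    have hDQ : ((triM a).det : ℚ) ≠ 0 := by rw [← hdetA]; exact hdetne
    have hrelQ : ((triM a).det : ℚ) * θ = ((triM (fun i : Fin n => a i.succ)).det : ℚ) * q := by
      exact_mod_cast hrel
    have hcast : ((p : ℚ)) ^ j = (q : ℚ) := by rw [hqdef]; push_cast; ring
    rw [hcast]
    field_simp
    linear_combination -hrelQ
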